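/- Let Γ be the presented group with generators g, h, f and relations h g h⁻¹ = g⁻¹, h f h⁻¹ = f⁻¹, and g f = f g. Let k, l, m be integers and set ξ = g^k · h^{2l+1} · f^m. Then the centralizer of ξ in Γ equals the subgroup of Γ generated by the set {ξ, h²}. -/

import Mathlib

/-- The relator set of the presented group
`Γ = ⟨g, h, f | h g h⁻¹ = g⁻¹, h f h⁻¹ = f⁻¹, g f = f g⟩`,
the fundamental group of the spherical tangent bundle of the Klein bottle.
Generator `0` is `g`, generator `1` is `h`, generator `2` is `f`. -/
def kleinSTRels : Set (FreeGroup (Fin 3)) :=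
  { FreeGroup.of 1 * FreeGroup.of 0 * (FreeGroup.of 1)⁻¹ * FreeGroup.of 0,
    FreeGroup.of 1 * FreeGroup.of 2 * (FreeGroup.of 1)⁻¹ * FreeGroup.of 2,
    FreeGroup.of 0 * FreeGroup.of 2 * (FreeGroup.of 0)⁻¹ * (FreeGroup.of 2)⁻¹ }

/-- The presented group `⟨g, h, f | h g h⁻¹ = g⁻¹, h f h⁻¹ = f⁻¹, g f = f g⟩`. -/
abbrev KleinST : Type := PresentedGroup kleinSTRels

def KleinST.g : KleinST := PresentedGroup.of 0
def KleinST.h : KleinST := PresentedGroup.of 1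
def KleinST.f : KleinST := PresentedGroup.of 2

/-! ### The sign `(-1)^d` -/

/-- `(-1)^d` as a function `ℤ → ℤ`. -/
def eps (d : ℤ) : ℤ := if Even d then 1 else -1

@[simp] lemma eps_zero : eps 0 = 1 := by simp [eps]
@[simp] lemma eps_one : eps 1 = -1 := by simp [eps, Int.even_iff]
@[simp] lemma eps_two : eps 2 = 1 := by simp [eps]
lemma eps_even {d : ℤ} (hd : Even d) : eps d = 1 := by simp [eps, hd]
lemma eps_odd {d : ℤ} (hd : Odd d) : eps d = -1 := by
  simp [eps, Int.even_iff, Int.odd_iff.1 hd]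
@[simp] lemma eps_neg (d : ℤ) : eps (-d) = eps d := by simp [eps]
lemma eps_neg_one : eps (-1) = -1 := by simp [eps, Int.even_iff]
lemma eps_add (c d : ℤ) : eps (c + d) = eps c * eps d := by
  rcases Int.even_or_odd c with hc | hc <;> rcases Int.even_or_odd d with hd | hd <;>
    simp_all [eps, Int.even_iff, Int.odd_iff] <;> omega
lemma eps_mul_self (d : ℤ) : eps d * eps d = 1 := by
  rcases Int.even_or_odd d with hd | hd <;> simp_all [eps, Int.even_iff, Int.odd_iff]

/-! ### A concrete model `K = (ℤ × ℤ) ⋊ ℤ` of the group -/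

/-- The concrete model: `(ℤ × ℤ) ⋊ ℤ`, where the `ℤ` factor (`c`, corresponding to `h`)
acts on `ℤ × ℤ` (coordinates `a` for `g` and `b` for `f`) by `(-1)^c`. -/
@[ext] structure K where
  a : ℤ
  b : ℤ
  c : ℤ

namespace K

instance : One K := ⟨⟨0,0,0⟩⟩
instance : Mul K := ⟨fun x y => ⟨x.a + eps x.c * y.a, x.b + eps x.c * y.b, x.c + y.c⟩⟩
instance : Inv K := ⟨fun x => ⟨-(eps x.c * x.a), -(eps x.c * x.b), -x.c⟩⟩

@[simp] lemma mul_def (x y : K) :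
    x * y = ⟨x.a + eps x.c * y.a, x.b + eps x.c * y.b, x.c + y.c⟩ := rfl
@[simp] lemma one_def : (1 : K) = ⟨0,0,0⟩ := rfl
@[simp] lemma inv_def (x : K) : x⁻¹ = ⟨-(eps x.c * x.a), -(eps x.c * x.b), -x.c⟩ := rfl

instance : Group K where
  mul_assoc x y z := by ext <;> simp [eps_add] <;> ring
  one_mul x := by ext <;> simp
  mul_one x := by ext <;> simp
  inv_mul_cancel x := by ext <;> simp [mul_comm, eps_mul_self, ← mul_assoc]

lemma g_zpow (n : ℤ) : (⟨1,0,0⟩ : K) ^ n = ⟨n,0,0⟩ := by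
  induction n using Int.induction_on with
  | zero => rfl
  | succ n ih => rw [zpow_add_one, ih]; ext <;> simp
  | pred n ih => rw [zpow_sub_one, ih]; ext <;> simp <;> ring

lemma f_zpow (n : ℤ) : (⟨0,1,0⟩ : K) ^ n = ⟨0,n,0⟩ := by
  induction n using Int.induction_on with
  | zero => rfl
  | succ n ih => rw [zpow_add_one, ih]; ext <;> simp
  | pred n ih => rw [zpow_sub_one, ih]; ext <;> simp <;> ring

lemma h_zpow (n : ℤ) : (⟨0,0,1⟩ : K) ^ n = ⟨0,0,n⟩ := by
  induction n using Int.induction_on with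
  | zero => rfl
  | succ n ih => rw [zpow_add_one, ih]; ext <;> simp
  | pred n ih => rw [zpow_sub_one, ih]; ext <;> simp <;> ring

lemma h2_zpow (n : ℤ) : (⟨0,0,2⟩ : K) ^ n = ⟨0,0,2*n⟩ := by
  have : (⟨0,0,2⟩ : K) = (⟨0,0,1⟩ : K) ^ (2:ℤ) := by rw [h_zpow]
  rw [this, ← zpow_mul, h_zpow]

/-- The centralizer computation in the concrete model. -/
lemma centralizer_eq (k m c : ℤ) (hc : Odd c) :
    Subgroup.centralizer {(⟨k,m,c⟩ : K)} =
      Subgroup.closure {(⟨k,m,c⟩ : K), ⟨0,0,2⟩} := by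
  apply le_antisymm
  · intro x hx
    have hcomm := hx (⟨k,m,c⟩ : K) rfl
    obtain ⟨a, b, d⟩ := x
    rw [mul_def, mul_def, K.mk.injEq] at hcomm
    obtain ⟨h1, h2, h3⟩ := hcomm
    rw [eps_odd hc] at h1 h2
    have hξ : (⟨k,m,c⟩ : K) ∈ Subgroup.closure {(⟨k,m,c⟩ : K), ⟨0,0,2⟩} :=
      Subgroup.subset_closure (by simp)
    have hh2 : (⟨0,0,2⟩ : K) ∈ Subgroup.closure {(⟨k,m,c⟩ : K), ⟨0,0,2⟩} :=
      Subgroup.subset_closure (by simp)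
    rcases Int.even_or_odd d with hd | hd
    · rw [eps_even hd] at h1 h2
      have ha : a = 0 := by linarith
      have hb : b = 0 := by linarith
      obtain ⟨t, ht⟩ := hd
      have : (⟨a,b,d⟩ : K) = (⟨0,0,2⟩ : K) ^ t := by
        rw [h2_zpow]; ext <;> simp [ha, hb]; omega
      rw [this]
      exact Subgroup.zpow_mem _ hh2 t
    · rw [eps_odd hd] at h1 h2
      have ha : a = k := by linarith
      have hb : b = m := by linarith
      obtain ⟨s, hs⟩ := hd
      obtain ⟨u, hu⟩ := hc
      have : (⟨a,b,d⟩ : K) = (⟨k,m,c⟩ : K) * (⟨0,0,2⟩ : K) ^ (s - u) := by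
        rw [h2_zpow]; ext <;> simp [ha, hb] <;> omega
      rw [this]
      exact Subgroup.mul_mem _ hξ (Subgroup.zpow_mem _ hh2 _)
  · rw [Subgroup.closure_le]
    rintro x (rfl | rfl)
    · intro y hy; rw [Set.mem_singleton_iff] at hy; rw [hy]
    · intro y hy; rw [Set.mem_singleton_iff] at hy; subst hy
      ext <;> simp [eps_odd hc] <;> ring

end K

/-! ### Relations and normal form in `KleinST` -/

namespace KleinST

lemma rel_of_mem {r : FreeGroup (Fin 3)} (hr : r ∈ kleinSTRels) :
    PresentedGroup.mk kleinSTRels r = 1 :=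
  (QuotientGroup.eq_one_iff _).2 (Subgroup.subset_normalClosure hr)

lemma rel1 : h * g * h⁻¹ * g = 1 := by
  have := rel_of_mem (r := FreeGroup.of 1 * FreeGroup.of 0 * (FreeGroup.of 1)⁻¹ * FreeGroup.of 0)
    (by simp [kleinSTRels])
  simpa [map_mul, map_inv, g, h, PresentedGroup.of] using this

lemma rel2 : h * f * h⁻¹ * f = 1 := by
  have := rel_of_mem (r := FreeGroup.of 1 * FreeGroup.of 2 * (FreeGroup.of 1)⁻¹ * FreeGroup.of 2)
    (by simp [kleinSTRels])
  simpa [map_mul, map_inv, f, h, PresentedGroup.of] using this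

lemma rel3 : g * f * g⁻¹ * f⁻¹ = 1 := by
  have := rel_of_mem
    (r := FreeGroup.of 0 * FreeGroup.of 2 * (FreeGroup.of 0)⁻¹ * (FreeGroup.of 2)⁻¹)
    (by simp [kleinSTRels])
  simpa [map_mul, map_inv, f, g, PresentedGroup.of] using this

lemma hgh : h * g * h⁻¹ = g⁻¹ := eq_inv_of_mul_eq_one_left rel1

lemma hfh : h * f * h⁻¹ = f⁻¹ := eq_inv_of_mul_eq_one_left rel2

lemma comm_gf : Commute g f := by
  unfold Commute SemiconjBy
  have : g * f * g⁻¹ = f := by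
    have h3 : (g * f * g⁻¹) * f⁻¹ = 1 := rel3
    have := eq_inv_of_mul_eq_one_right h3
    exact (inv_injective this).symm
  calc g * f = (g * f * g⁻¹) * g := by group
  _ = f * g := by rw [this]

lemma h_mul_gz (a : ℤ) : h * g ^ a = g ^ (-a) * h := by
  have e1 : h * g ^ a * h⁻¹ = (h * g * h⁻¹) ^ a := by
    have := map_zpow (MulAut.conj h) g a
    simpa [MulAut.conj_apply] using this
  rw [hgh, inv_zpow, ← zpow_neg] at e1
  calc h * g ^ a = (h * g ^ a * h⁻¹) * h := by group
  _ = g ^ (-a) * h := by rw [e1]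

lemma hinv_mul_gz (a : ℤ) : h⁻¹ * g ^ a = g ^ (-a) * h⁻¹ := by
  have := h_mul_gz (-a)
  rw [neg_neg] at this
  calc h⁻¹ * g ^ a = h⁻¹ * (g ^ a * h) * h⁻¹ := by group
  _ = h⁻¹ * (h * g ^ (-a)) * h⁻¹ := by rw [this]
  _ = g ^ (-a) * h⁻¹ := by group

lemma h_mul_fz (b : ℤ) : h * f ^ b = f ^ (-b) * h := by
  have e1 : h * f ^ b * h⁻¹ = (h * f * h⁻¹) ^ b := by
    have := map_zpow (MulAut.conj h) f b
    simpa [MulAut.conj_apply] using this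
  rw [hfh, inv_zpow, ← zpow_neg] at e1
  calc h * f ^ b = (h * f ^ b * h⁻¹) * h := by group
  _ = f ^ (-b) * h := by rw [e1]

lemma hinv_mul_fz (b : ℤ) : h⁻¹ * f ^ b = f ^ (-b) * h⁻¹ := by
  have := h_mul_fz (-b)
  rw [neg_neg] at this
  calc h⁻¹ * f ^ b = h⁻¹ * (f ^ b * h) * h⁻¹ := by group
  _ = h⁻¹ * (h * f ^ (-b)) * h⁻¹ := by rw [this]
  _ = f ^ (-b) * h⁻¹ := by group

lemma hz_mul_gz (c : ℤ) : ∀ a : ℤ, h ^ c * g ^ a = g ^ (eps c * a) * h ^ c := by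
  induction c using Int.induction_on with
  | zero => intro a; simp
  | succ n ih =>
    intro a
    have hq : eps (↑n + 1) * a = eps ↑n * (-a) := by rw [eps_add, eps_one]; ring
    rw [hq, zpow_add_one, mul_assoc, h_mul_gz, ← mul_assoc, ih, mul_assoc]
  | pred n ih =>
    intro a
    have hq : eps (-↑n - 1) * a = eps (-↑n) * (-a) := by
      rw [show (-↑n - 1 : ℤ) = -↑n + (-1) by ring, eps_add, eps_neg_one]; ring
    rw [hq, zpow_sub_one, mul_assoc, hinv_mul_gz, ← mul_assoc, ih, mul_assoc]

lemma hz_mul_fz (c : ℤ) : ∀ b : ℤ, h ^ c * f ^ b = f ^ (eps c * b) * h ^ c := by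
  induction c using Int.induction_on with
  | zero => intro b; simp
  | succ n ih =>
    intro b
    have hq : eps (↑n + 1) * b = eps ↑n * (-b) := by rw [eps_add, eps_one]; ring
    rw [hq, zpow_add_one, mul_assoc, h_mul_fz, ← mul_assoc, ih, mul_assoc]
  | pred n ih =>
    intro b
    have hq : eps (-↑n - 1) * b = eps (-↑n) * (-b) := by
      rw [show (-↑n - 1 : ℤ) = -↑n + (-1) by ring, eps_add, eps_neg_one]; ring
    rw [hq, zpow_sub_one, mul_assoc, hinv_mul_fz, ← mul_assoc, ih, mul_assoc]

/-- Normal form `g^a f^b h^c` of elements of `KleinST`. -/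
def NF (a b c : ℤ) : KleinST := g ^ a * f ^ b * h ^ c

lemma NF_mul (a b c a' b' c' : ℤ) :
    NF a b c * NF a' b' c' = NF (a + eps c * a') (b + eps c * b') (c + c') := by
  unfold NF
  rw [zpow_add (a := h)]
  calc g ^ a * f ^ b * h ^ c * (g ^ a' * f ^ b' * h ^ c')
      = g ^ a * f ^ b * (h ^ c * g ^ a') * (f ^ b' * h ^ c') := by group
    _ = g ^ a * f ^ b * (g ^ (eps c * a') * h ^ c) * (f ^ b' * h ^ c') := by rw [hz_mul_gz]
    _ = g ^ a * f ^ b * g ^ (eps c * a') * (h ^ c * f ^ b') * h ^ c' := by group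
    _ = g ^ a * f ^ b * g ^ (eps c * a') * (f ^ (eps c * b') * h ^ c) * h ^ c' := by
        rw [hz_mul_fz]
    _ = g ^ a * (f ^ b * g ^ (eps c * a')) * f ^ (eps c * b') * h ^ c * h ^ c' := by group
    _ = g ^ a * (g ^ (eps c * a') * f ^ b) * f ^ (eps c * b') * h ^ c * h ^ c' := by
        rw [((comm_gf.zpow_zpow (eps c * a') b).symm : f ^ b * g ^ (eps c * a') = _)]
    _ = g ^ (a + eps c * a') * f ^ (b + eps c * b') * (h ^ c * h ^ c') := by
        rw [zpow_add, zpow_add]; group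

lemma NF_inv (a b c : ℤ) : (NF a b c)⁻¹ = NF (-(eps c * a)) (-(eps c * b)) (-c) := by
  apply inv_eq_of_mul_eq_one_right
  rw [NF_mul]
  have h1 : a + eps c * -(eps c * a) = 0 := by linear_combination (-a) * eps_mul_self c
  have h2 : b + eps c * -(eps c * b) = 0 := by linear_combination (-b) * eps_mul_self c
  rw [h1, h2, add_neg_cancel]
  unfold NF; group

/-! ### The homomorphism to the model and the normal form theorem -/

def pigen : Fin 3 → K := ![⟨1,0,0⟩, ⟨0,0,1⟩, ⟨0,1,0⟩]

lemma rels_hold : ∀ r ∈ kleinSTRels, FreeGroup.lift pigen r = 1 := by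
  intro r hr
  rcases hr with rfl | rfl | rfl <;>
    · simp only [map_mul, map_inv, FreeGroup.lift_apply_of, pigen,
        Matrix.cons_val_zero, Matrix.cons_val_one, Matrix.head_cons]
      ext <;> simp <;> norm_num

/-- The homomorphism from `KleinST` to the concrete model `K`. -/
def pi : KleinST →* K := PresentedGroup.toGroup rels_hold

@[simp] lemma pi_g : pi g = ⟨1,0,0⟩ := PresentedGroup.toGroup.of rels_hold
@[simp] lemma pi_h : pi h = ⟨0,0,1⟩ := PresentedGroup.toGroup.of rels_hold
@[simp] lemma pi_f : pi f = ⟨0,1,0⟩ := PresentedGroup.toGroup.of rels_hold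

lemma pi_NF (a b c : ℤ) : pi (NF a b c) = ⟨a,b,c⟩ := by
  unfold NF
  rw [map_mul, map_mul, map_zpow, map_zpow, map_zpow, pi_g, pi_f, pi_h,
    K.g_zpow, K.f_zpow, K.h_zpow]
  ext <;> simp

/-- Normal form theorem: every element equals the normal form read off from its image in `K`. -/
lemma NF_pi : ∀ x : KleinST, x = NF (pi x).a (pi x).b (pi x).c := by
  intro x
  induction x using PresentedGroup.induction_on with
  | H z =>
    refine FreeGroup.induction_on
      (C := fun z => PresentedGroup.mk kleinSTRels z =
        NF (pi (PresentedGroup.mk kleinSTRels z)).a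
          (pi (PresentedGroup.mk kleinSTRels z)).b
          (pi (PresentedGroup.mk kleinSTRels z)).c) z ?_ ?_ ?_ ?_
    · simp only [map_one]
      show (1 : KleinST) = NF (0:ℤ) 0 0
      unfold NF; group
    · intro i
      fin_cases i
      · show g = NF (pi g).a (pi g).b (pi g).c
        rw [pi_g]; unfold NF; group
      · show h = NF (pi h).a (pi h).b (pi h).c
        rw [pi_h]; unfold NF; group
      · show f = NF (pi f).a (pi f).b (pi f).c
        rw [pi_f]; unfold NF; group
    · intro i hi
      rw [map_inv]
      conv_lhs => rw [hi]
      rw [NF_inv, map_inv]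
      rfl
    · intro x y hx hy
      rw [map_mul]
      conv_lhs => rw [hx, hy]
      rw [NF_mul, map_mul]
      rfl

lemma pi_injective : Function.Injective pi := by
  intro x y hxy
  rw [NF_pi x, NF_pi y, hxy]

lemma pi_surjective : Function.Surjective pi := by
  rintro ⟨a, b, c⟩
  exact ⟨NF a b c, pi_NF a b c⟩

/-- `KleinST` is isomorphic to the model `K`. -/
noncomputable def e : KleinST ≃* K :=
  MulEquiv.ofBijective pi ⟨pi_injective, pi_surjective⟩

@[simp] lemma e_apply (x : KleinST) : e x = pi x := rfl

end KleinST

/-! ### Main theorem -/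

/-- In `Γ = ⟨g, h, f | h g h⁻¹ = g⁻¹, h f h⁻¹ = f⁻¹, g f = f g⟩`, for integers `k, l, m`
and `ξ = g ^ k * h ^ (2l+1) * f ^ m`, the centralizer of `ξ` is the subgroup generated
by `{ξ, h ^ 2}`. -/
theorem kleinST_centralizer_orientation_reversing (k l m : ℤ) :
    Subgroup.centralizer {KleinST.g ^ k * KleinST.h ^ (2 * l + 1) * KleinST.f ^ m} =
      Subgroup.closure
        {KleinST.g ^ k * KleinST.h ^ (2 * l + 1) * KleinST.f ^ m, KleinST.h ^ 2} := by
  set ξ := KleinST.g ^ k * KleinST.h ^ (2 * l + 1) * KleinST.f ^ m with hξ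
  have hπξ : KleinST.pi ξ = ⟨k, -m, 2*l+1⟩ := by
    rw [hξ, map_mul, map_mul, map_zpow, map_zpow, map_zpow,
      KleinST.pi_g, KleinST.pi_h, KleinST.pi_f,
      K.g_zpow, K.h_zpow, K.f_zpow]
    have hodd : Odd (2*l+1) := ⟨l, by ring⟩
    ext <;> simp [eps_odd hodd]
  have hπh2 : KleinST.pi (KleinST.h ^ (2:ℤ)) = ⟨0, 0, 2⟩ := by
    rw [map_zpow, KleinST.pi_h, K.h_zpow]
  have hK := K.centralizer_eq k (-m) (2*l+1) ⟨l, by ring⟩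
  -- centralizer is the comap of the centralizer
  have hcent : Subgroup.centralizer {ξ} =
      Subgroup.comap KleinST.e.toMonoidHom (Subgroup.centralizer {KleinST.e ξ}) := by
    ext x
    simp only [Subgroup.mem_comap, Subgroup.mem_centralizer_iff,
      Set.mem_singleton_iff, forall_eq]
    constructor
    · intro hcm
      simp only [MulEquiv.coe_toMonoidHom, KleinST.e_apply, ← map_mul, hcm]
    · intro hcm
      apply KleinST.pi_injective
      simpa only [map_mul, KleinST.e_apply, MulEquiv.coe_toMonoidHom] using hcm
  have hclos : Subgroup.closure {ξ, KleinST.h ^ (2:ℤ)} =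
      Subgroup.comap KleinST.e.toMonoidHom
        (Subgroup.closure {KleinST.e ξ, KleinST.e (KleinST.h ^ (2:ℤ))}) := by
    rw [Subgroup.comap_equiv_eq_map_symm', MonoidHom.map_closure]
    congr 1
    rw [Set.image_pair]
    simp only [MulEquiv.coe_toMonoidHom, MulEquiv.symm_apply_apply]
  have h2z : KleinST.h ^ (2:ℕ) = KleinST.h ^ (2:ℤ) := by norm_cast
  rw [h2z, hcent, hclos]
  congr 1
  rw [KleinST.e_apply, KleinST.e_apply, hπξ, hπh2, hK]
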